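/- Let G = (V,E) be a finite simple graph with star number γ(G) = k. Let X be a nonempty finite set of new vertices disjoint from V, let p : X → V be any function, and let G' be the graph on V ∪ X whose edges are the edges of G together with the edges x p(x) for x ∈ X (so that each x ∈ X is a pendant vertex of G'). Then γ(G') ≤ k + 1. -/

import Mathlib

open SimpleGraph

/-- A `k`-witness for a simple graph `G`: a positive weight function `w` on the vertices
together with `k` increasingly ordered intervals `[a i, b i]` of positive reals such that
two distinct vertices are adjacent iff the sum of their weights lies in ⋃ i, [a i, b i]. -/
structure StarWitness {V : Type*} (G : SimpleGraph V) (k : ℕ) where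
  w : V → ℝ
  a : Fin k → ℝ
  b : Fin k → ℝ
  w_pos : ∀ v, 0 < w v
  a_pos : ∀ i, 0 < a i
  a_le_b : ∀ i, a i ≤ b i
  ordered : ∀ i j : Fin k, i < j → b i < a j
  adj_iff : ∀ u v : V, u ≠ v →
    (G.Adj u v ↔ ∃ i : Fin k, a i ≤ w u + w v ∧ w u + w v ≤ b i)

/-- The star number `γ(G)` of a graph `G`: the smallest positive integer `k` such that
`G` admits a `k`-witness (i.e. `G` is a star-`k`-PCG). -/
noncomputable def starNumber {V : Type*} (G : SimpleGraph V) : ℕ :=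
  sInf {k | 0 < k ∧ Nonempty (StarWitness G k)}

/-- A witness is left-free if the weight of every non-edge exceeds `b 1` (the right endpoint
of the first interval). -/
def StarWitness.LeftFree {V : Type*} {G : SimpleGraph V} {k : ℕ}
    (W : StarWitness G k) : Prop :=
  ∀ u v : V, u ≠ v → ¬ G.Adj u v → ∀ i : Fin k, (i : ℕ) = 0 → W.b i < W.w u + W.w v

/-- A witness is right-free if the weight of every non-edge is below `a k` (the left endpoint
of the last interval). -/
def StarWitness.RightFree {V : Type*} {G : SimpleGraph V} {k : ℕ}
    (W : StarWitness G k) : Prop :=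
  ∀ u v : V, u ≠ v → ¬ G.Adj u v → ∀ i : Fin k, (i : ℕ) = k - 1 → W.w u + W.w v < W.a i

/-- A witness is in normal form if all weights are pairwise distinct and no doubled weight
equals the sum of the weights of two distinct vertices. -/
def StarWitness.NormalForm {V : Type*} {G : SimpleGraph V} {k : ℕ}
    (W : StarWitness G k) : Prop :=
  Function.Injective W.w ∧
    ∀ x u₁ u₂ : V, u₁ ≠ u₂ → 2 * W.w x ≠ W.w u₁ + W.w u₂

/-- The graph obtained from `G` by attaching, for each `x : X`, a new pendant vertex
adjacent exactly to `p x`. -/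
def addPendants {V X : Type*} (G : SimpleGraph V) (p : X → V) : SimpleGraph (V ⊕ X) where
  Adj a b :=
    match a, b with
    | Sum.inl u, Sum.inl v => G.Adj u v
    | Sum.inl u, Sum.inr x => p x = u
    | Sum.inr x, Sum.inl u => p x = u
    | Sum.inr _, Sum.inr _ => False
  symm := by
    constructor
    rintro (u | x) (v | y) h
    · exact h.symm
    · exact h
    · exact h
    · exact h
  loopless := by
    constructor
    rintro (u | x) h
    · exact G.irrefl h
    · exact h


lemma pow3_aux (i j i' j' : ℕ) (hij : i ≤ j) (hij' : i' ≤ j')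
    (h : 3^i + 3^j = 3^i' + 3^j') : i = i' ∧ j = j' := by
  have hj : j = j' := by
    rcases lt_trichotomy j j' with hlt | he | hgt
    · exfalso
      have h1 : 3^i ≤ 3^j := Nat.pow_le_pow_right (by norm_num) hij
      have h2 : 3^(j+1) ≤ 3^j' := Nat.pow_le_pow_right (by norm_num) hlt
      have h3 : 3^(j+1) = 3 * 3^j := by ring
      have h4 : 1 ≤ 3^i' := Nat.one_le_pow _ _ (by norm_num)
      omega
    · exact he
    · exfalso
      have h1 : 3^i' ≤ 3^j' := Nat.pow_le_pow_right (by norm_num) hij'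
      have h2 : 3^(j'+1) ≤ 3^j := Nat.pow_le_pow_right (by norm_num) hgt
      have h3 : 3^(j'+1) = 3 * 3^j' := by ring
      have h4 : 1 ≤ 3^i := Nat.one_le_pow _ _ (by norm_num)
      omega
  subst hj
  have : 3^i = 3^i' := by omega
  exact ⟨Nat.pow_right_injective (by norm_num) this, rfl⟩

lemma pow3_add_inj (i j i' j' : ℕ) (h : 3^i + 3^j = 3^i' + 3^j') :
    (i = i' ∧ j = j') ∨ (i = j' ∧ j = i') := by
  rcases le_total i j with hij | hij <;> rcases le_total i' j' with hij' | hij'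
  · exact Or.inl (pow3_aux i j i' j' hij hij' h)
  · have := pow3_aux i j j' i' hij hij' (by omega)
    exact Or.inr this
  · have := pow3_aux j i i' j' hij hij' (by omega)
    exact Or.inr ⟨this.2, this.1⟩
  · have := pow3_aux j i j' i' hij hij' (by omega)
    exact Or.inl ⟨this.2, this.1⟩

lemma exists_starWitness {V : Type*} [Fintype V] (G : SimpleGraph V) :
    ∃ m, 0 < m ∧ Nonempty (StarWitness G m) := by
  classical
  set n := Fintype.card V with hn
  let e : V ≃ Fin n := Fintype.equivFin V
  let f : V → ℕ := fun v => 3 ^ (e v : ℕ)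
  have hflt : ∀ v, f v < 3 ^ n := fun v => Nat.pow_lt_pow_right (by norm_num) (e v).isLt
  have fkey : ∀ u v u' v' : V, f u + f v = f u' + f v' →
      (u = u' ∧ v = v') ∨ (u = v' ∧ v = u') := by
    intro u v u' v' h
    rcases pow3_add_inj _ _ _ _ h with ⟨h1, h2⟩ | ⟨h1, h2⟩
    · exact Or.inl ⟨e.injective (Fin.val_injective h1), e.injective (Fin.val_injective h2)⟩
    · exact Or.inr ⟨e.injective (Fin.val_injective h1), e.injective (Fin.val_injective h2)⟩
  set M : ℕ := 2 * 3 ^ n with hM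
  have hsumM : ∀ u v : V, f u + f v < M := fun u v => by
    have := hflt u; have := hflt v; omega
  set S : Finset ℕ :=
    (Finset.univ.filter (fun q : V × V => G.Adj q.1 q.2)).image (fun q => f q.1 + f q.2)
    with hS
  have memS : ∀ s : ℕ, s ∈ S ↔ ∃ q : V × V, G.Adj q.1 q.2 ∧ f q.1 + f q.2 = s := by
    intro s
    simp [hS]
  set S' : Finset ℕ := insert M S with hS'
  have hpos : ∀ s ∈ S', 0 < s := by
    intro s hs
    rcases Finset.mem_insert.mp hs with rfl | hs
    · positivity
    · obtain ⟨q, _, rfl⟩ := (memS s).mp hs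
      have : 0 < f q.1 := Nat.pow_pos (by norm_num)
      omega
  refine ⟨S'.card, ?_, ⟨?_⟩⟩
  · exact Finset.card_pos.mpr ⟨M, Finset.mem_insert_self M S⟩
  · set c := S'.orderIsoOfFin rfl with hc
    refine ⟨fun v => (f v : ℝ), fun i => ((c i : ℕ) : ℝ), fun i => ((c i : ℕ) : ℝ),
      ?_, ?_, fun i => le_refl _, ?_, ?_⟩
    · intro v
      have : 0 < f v := Nat.pow_pos (by norm_num)
      show (0 : ℝ) < (f v : ℝ)
      exact_mod_cast this
    · intro i
      show (0 : ℝ) < ((c i : ℕ) : ℝ)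
      exact_mod_cast hpos _ (c i).2
    · intro i j hij
      show ((c i : ℕ) : ℝ) < ((c j : ℕ) : ℝ)
      exact_mod_cast Subtype.coe_lt_coe.mpr ((c.lt_iff_lt).mpr hij)
    · intro u v huv
      constructor
      · intro hadj
        have hs : f u + f v ∈ S' := by
          refine Finset.mem_insert_of_mem ?_
          exact (memS _).mpr ⟨(u, v), hadj, rfl⟩
        obtain ⟨i, hi⟩ := c.surjective ⟨_, hs⟩
        have hval : (c i : ℕ) = f u + f v := congrArg Subtype.val hi
        have hval' : ((c i : ℕ) : ℝ) = (f u : ℝ) + (f v : ℝ) := by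
          rw [hval]; push_cast; ring
        exact ⟨i, le_of_eq hval', ge_of_eq hval'⟩
      · rintro ⟨i, h1, h2⟩
        have hciV : ((c i : ℕ) : ℝ) = ((f u + f v : ℕ) : ℝ) := by
          push_cast at h1 h2 ⊢; linarith
        have hci : (c i : ℕ) = f u + f v := Nat.cast_injective hciV
        have : (c i : ℕ) ∈ S' := (c i).2
        rw [hci] at this
        rcases Finset.mem_insert.mp this with hMeq | hSmem
        · exact absurd hMeq (Nat.ne_of_lt (hsumM u v))
        · obtain ⟨q, hadj, hq⟩ := (memS _).mp hSmem
          rcases fkey _ _ _ _ hq with ⟨rfl, rfl⟩ | ⟨rfl, rfl⟩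
          · exact hadj
          · exact hadj.symm

lemma exists_injective_witness {V : Type*} [Fintype V] {G : SimpleGraph V} {k : ℕ}
    (W : StarWitness G k) : ∃ W' : StarWitness G k, Function.Injective W'.w := by
  classical
  set n := Fintype.card V with hn
  let e : V ≃ Fin n := Fintype.equivFin V
  let f : V → ℝ := fun v => ((e v : ℕ) : ℝ)
  have hf0 : ∀ v, 0 ≤ f v := fun v => Nat.cast_nonneg _
  have hfn : ∀ v, f v ≤ (n : ℝ) := fun v => by
    have h : (e v : ℕ) ≤ n := (e v).isLt.le
    show ((e v : ℕ) : ℝ) ≤ (n : ℝ)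
    exact_mod_cast h
  have hfinj : Function.Injective f := fun u v h =>
    e.injective (Fin.val_injective (Nat.cast_injective h))
  set T : Finset ℝ :=
    insert 1 (
      ((Finset.univ.filter (fun q : V × V => q.1 ≠ q.2 ∧ ¬ G.Adj q.1 q.2)) ×ˢ
          (Finset.univ : Finset (Fin k))).image
        (fun z => if W.w z.1.1 + W.w z.1.2 < W.a z.2 then
            W.a z.2 - (W.w z.1.1 + W.w z.1.2)
          else (W.w z.1.1 + W.w z.1.2) - W.b z.2)
      ∪ (Finset.univ.filter (fun q : Fin k × Fin k => q.1 < q.2)).image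
          (fun q => W.a q.2 - W.b q.1)) with hT
  have hTne : T.Nonempty := ⟨1, Finset.mem_insert_self _ _⟩
  set ρ : ℝ := T.min' hTne with hρ
  have hρ_le : ∀ x ∈ T, ρ ≤ x := fun x hx => Finset.min'_le T x hx
  have hTpos : ∀ x ∈ T, 0 < x := by
    intro x hx
    rcases Finset.mem_insert.mp hx with rfl | hx
    · norm_num
    rcases Finset.mem_union.mp hx with hx | hx
    · obtain ⟨z, hz, rfl⟩ := Finset.mem_image.mp hx
      obtain ⟨hz1, -⟩ := Finset.mem_product.mp hz
      obtain ⟨-, hne, hnadj⟩ := Finset.mem_filter.mp hz1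
      split_ifs with hlt
      · linarith
      · push_neg at hlt
        have hni := (W.adj_iff z.1.1 z.1.2 hne).not.mp hnadj
        push_neg at hni
        have := hni z.2 hlt
        linarith
    · obtain ⟨q, hq, rfl⟩ := Finset.mem_image.mp hx
      obtain ⟨-, hlt⟩ := Finset.mem_filter.mp hq
      have := W.ordered q.1 q.2 hlt
      linarith
  have hρ_pos : 0 < ρ := hTpos _ (T.min'_mem hTne)
  -- the threshold for nonedges
  have hnedge : ∀ u v : V, u ≠ v → ¬ G.Adj u v → ∀ i : Fin k,
      ρ ≤ (if W.w u + W.w v < W.a i then W.a i - (W.w u + W.w v)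
           else (W.w u + W.w v) - W.b i) := by
    intro u v hne hnadj i
    refine hρ_le _ ?_
    refine Finset.mem_insert_of_mem (Finset.mem_union_left _ ?_)
    exact Finset.mem_image.mpr ⟨((u, v), i), Finset.mem_product.mpr
      ⟨Finset.mem_filter.mpr ⟨Finset.mem_univ _, hne, hnadj⟩, Finset.mem_univ _⟩, rfl⟩
  have hgap : ∀ i j : Fin k, i < j → ρ ≤ W.a j - W.b i := by
    intro i j hij
    refine hρ_le _ ?_
    refine Finset.mem_insert_of_mem (Finset.mem_union_right _ ?_)
    exact Finset.mem_image.mpr ⟨(i, j), Finset.mem_filter.mpr ⟨Finset.mem_univ _, hij⟩, rfl⟩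
  -- bad set of t values
  set Bad : Finset ℝ := (Finset.univ.filter (fun q : V × V => q.1 ≠ q.2)).image
      (fun q => (W.w q.2 - W.w q.1) / (f q.1 - f q.2)) with hBad
  have hηpos : 0 < ρ / (2 * (2 * (n : ℝ) + 1)) := by positivity
  obtain ⟨t, htmem, htbad⟩ :=
    (Set.Ioo_infinite hηpos).exists_notMem_finset Bad
  obtain ⟨htpos, htlt⟩ := htmem
  have hpert : ∀ u v : V, t * (f u + f v) < ρ / 2 := by
    intro u v
    have h1 : t * (f u + f v) ≤ t * (2 * (n : ℝ)) := by
      have := hfn u; have := hfn v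
      nlinarith
    have h2 : t * (2 * (n : ℝ)) < t * (2 * (n : ℝ) + 1) := by nlinarith
    have h3 : t * (2 * (n : ℝ) + 1) < ρ / 2 := by
      have hd : (0:ℝ) < 2 * (n : ℝ) + 1 := by positivity
      have := mul_lt_mul_of_pos_right htlt hd
      calc t * (2 * (n : ℝ) + 1) < ρ / (2 * (2 * (n : ℝ) + 1)) * (2 * (n : ℝ) + 1) := this
        _ = ρ / 2 := by field_simp
    linarith
  have hpert0 : ∀ u v : V, 0 ≤ t * (f u + f v) := by
    intro u v
    have := hf0 u; have := hf0 v
    positivity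
  refine ⟨⟨fun v => W.w v + t * f v, W.a, fun i => W.b i + ρ / 2, ?_, W.a_pos, ?_, ?_, ?_⟩, ?_⟩
  · intro v
    have h1 := W.w_pos v; have h2 := hf0 v
    show 0 < W.w v + t * f v
    nlinarith
  · intro i
    have := W.a_le_b i
    linarith
  · intro i j hij
    have := hgap i j hij
    linarith
  · intro u v hne
    constructor
    · intro hadj
      obtain ⟨i, h1, h2⟩ := (W.adj_iff u v hne).mp hadj
      refine ⟨i, ?_, ?_⟩
      · have := hpert0 u v
        nlinarith
      · have := hpert u v
        nlinarith
    · rintro ⟨i, h1, h2⟩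
      by_contra hnadj
      have hth := hnedge u v hne hnadj i
      have hp := hpert u v
      have hp0 := hpert0 u v
      split_ifs at hth with hlt
      · linarith
      · push_neg at hlt
        linarith
  · intro u v huv
    by_contra hne
    simp only [] at huv
    have hfne : f u - f v ≠ 0 := sub_ne_zero.mpr (fun h => hne (hfinj h))
    have ht : t = (W.w v - W.w u) / (f u - f v) := by
      field_simp
      linarith
    exact htbad (ht ▸ Finset.mem_image.mpr ⟨(u, v),
      Finset.mem_filter.mpr ⟨Finset.mem_univ _, hne⟩, rfl⟩)


/-- Theorem 10 (general case): adding pendant vertices increases the star number by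
at most one. -/
theorem stmt_10 {V X : Type*} [Fintype V] [Fintype X] [Nonempty X]
    (G : SimpleGraph V) (p : X → V) (k : ℕ)
    (hg : starNumber G = k) :
    starNumber (addPendants G p) ≤ k + 1 := by
  classical
  obtain ⟨m, hm, hWm⟩ := exists_starWitness G
  have hsetne : {j | 0 < j ∧ Nonempty (StarWitness G j)}.Nonempty := ⟨m, hm, hWm⟩
  have hmem := Nat.sInf_mem hsetne
  rw [show sInf {j | 0 < j ∧ Nonempty (StarWitness G j)} = starNumber G from rfl, hg] at hmem
  obtain ⟨hkpos, ⟨W0⟩⟩ := hmem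
  obtain ⟨W, hWinj⟩ := exists_injective_witness W0
  haveI hV : Nonempty V := ⟨p (Classical.arbitrary X)⟩
  haveI hFk : Nonempty (Fin k) := ⟨⟨0, hkpos⟩⟩
  set B : ℝ := Finset.univ.sup' Finset.univ_nonempty W.w with hB
  have hBge : ∀ v, W.w v ≤ B := fun v => Finset.le_sup' _ (Finset.mem_univ v)
  have hBpos : 0 < B := lt_of_lt_of_le (W.w_pos (Classical.arbitrary V)) (hBge _)
  set Bk : ℝ := Finset.univ.sup' Finset.univ_nonempty W.b with hBk
  have hBkge : ∀ i, W.b i ≤ Bk := fun i => Finset.le_sup' _ (Finset.mem_univ i)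
  have hBkpos : 0 < Bk :=
    lt_of_lt_of_le (lt_of_lt_of_le (W.a_pos (Classical.arbitrary (Fin k)))
      (W.a_le_b _)) (hBkge _)
  set C : ℝ := Bk + 2 * B + 1 with hC
  have hBkC : Bk < C := by simp only [hC]; linarith
  have hwleB : ∀ v, W.w v ≤ B := hBge
  set a2 : Fin (k + 1) → ℝ := Fin.snoc W.a C with ha2
  set b2 : Fin (k + 1) → ℝ := Fin.snoc W.b C with hb2def
  -- auxiliary: every right endpoint of new intervals is ≤ C
  have hb2le : ∀ i : Fin (k + 1), b2 i ≤ C := by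
    intro i
    rcases Fin.eq_castSucc_or_eq_last i with ⟨j, rfl⟩ | rfl
    · simp only [hb2def, Fin.snoc_castSucc]
      exact le_of_lt (lt_of_le_of_lt (hBkge j) hBkC)
    · simp [hb2def]
  refine Nat.sInf_le ⟨Nat.succ_pos k, ⟨⟨
    (fun z => match z with
      | Sum.inl v => W.w v
      | Sum.inr x => C - W.w (p x)),
    a2, b2, ?_, ?_, ?_, ?_, ?_⟩⟩⟩
  · rintro (v | x)
    · exact W.w_pos v
    · show 0 < C - W.w (p x)
      have := hBge (p x)
      simp only [hC]; linarith
  · intro i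
    rcases Fin.eq_castSucc_or_eq_last i with ⟨j, rfl⟩ | rfl
    · simp only [ha2, Fin.snoc_castSucc]
      exact W.a_pos j
    · simp only [ha2, Fin.snoc_last]
      linarith
  · intro i
    rcases Fin.eq_castSucc_or_eq_last i with ⟨j, rfl⟩ | rfl
    · simp only [ha2, hb2def, Fin.snoc_castSucc]
      exact W.a_le_b j
    · simp only [ha2, hb2def, Fin.snoc_last]
      exact le_refl C
  · intro i j hij
    rcases Fin.eq_castSucc_or_eq_last j with ⟨j', rfl⟩ | rfl
    · rcases Fin.eq_castSucc_or_eq_last i with ⟨i', rfl⟩ | rfl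
      · simp only [ha2, hb2def, Fin.snoc_castSucc]
        exact W.ordered i' j' (Fin.castSucc_lt_castSucc_iff.mp hij)
      · exact absurd hij (not_lt.mpr (Fin.castSucc_lt_last j').le)
    · rcases Fin.eq_castSucc_or_eq_last i with ⟨i', rfl⟩ | rfl
      · simp only [ha2, hb2def, Fin.snoc_castSucc, Fin.snoc_last]
        exact lt_of_le_of_lt (hBkge i') hBkC
      · exact absurd hij (lt_irrefl _)
  · rintro (u | x) (v | y) hne
    · -- inl inl
      have hne' : u ≠ v := fun h => hne (congrArg Sum.inl h)
      show G.Adj u v ↔ _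
      rw [W.adj_iff u v hne']
      constructor
      · rintro ⟨i, h1, h2⟩
        exact ⟨i.castSucc, by simp only [ha2, Fin.snoc_castSucc]; exact h1,
          by simp only [hb2def, Fin.snoc_castSucc]; exact h2⟩
      · rintro ⟨i, h1, h2⟩
        rcases Fin.eq_castSucc_or_eq_last i with ⟨j, rfl⟩ | rfl
        · simp only [ha2, hb2def, Fin.snoc_castSucc] at h1 h2
          exact ⟨j, h1, h2⟩
        · simp only [ha2, Fin.snoc_last] at h1
          have := hBge u; have := hBge v
          exact absurd h1 (by simp only [hC]; push_neg; linarith)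
    · -- inl inr
      show p y = u ↔ _
      constructor
      · rintro rfl
        refine ⟨Fin.last k, ?_, ?_⟩ <;> simp only [ha2, hb2def, Fin.snoc_last] <;> ring_nf <;> simp
      · rintro ⟨i, h1, h2⟩
        rcases Fin.eq_castSucc_or_eq_last i with ⟨j, rfl⟩ | rfl
        · simp only [hb2def, Fin.snoc_castSucc] at h2
          have := hBge (p y); have := hBkge j; have := W.w_pos u
          exact absurd h2 (by simp only [hC] at *; push_neg; linarith)
        · simp only [ha2, hb2def, Fin.snoc_last] at h1 h2
          have h3 : W.w u = W.w (p y) := by linarith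
          exact (hWinj h3).symm
    · -- inr inl
      show p x = v ↔ _
      constructor
      · rintro rfl
        refine ⟨Fin.last k, ?_, ?_⟩ <;> simp only [ha2, hb2def, Fin.snoc_last] <;> ring_nf <;> simp
      · rintro ⟨i, h1, h2⟩
        rcases Fin.eq_castSucc_or_eq_last i with ⟨j, rfl⟩ | rfl
        · simp only [hb2def, Fin.snoc_castSucc] at h2
          have := hBge (p x); have := hBkge j; have := W.w_pos v
          exact absurd h2 (by simp only [hC] at *; push_neg; linarith)
        · simp only [ha2, hb2def, Fin.snoc_last] at h1 h2
          have h3 : W.w v = W.w (p x) := by linarith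
          exact (hWinj h3).symm
    · -- inr inr
      show False ↔ _
      constructor
      · exact fun h => absurd h (by exact not_false)
      · rintro ⟨i, h1, h2⟩
        have h3 := hb2le i
        have := hBge (p x); have := hBge (p y)
        simp only [hC] at *
        linarith
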